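/- Let $b_1<1$, $a>0$, $\nu>0$, and $b_2\in\mathbb{R}$ with $b_1+b_2=a+\nu$. Then for all $r>0$ and $t\in\mathbb{R}$: $\int_{t-r}^{t+r} \frac{(1+|y|)^{-b_1}}{(r-t+y)^{1-a}}\cdot \max(1+|y|,\,1+|t-r|)^{-b_2}\,dy \leq C\, r^a\,(1+|t|+r)^{-a}(1+||t|-r|)^{-\nu}$, with $C$ independent of $r,t$. -/

import Mathlib

open MeasureTheory Real Set


lemma rpAnti {x y : ℝ} (c : ℝ) (hx : 0 < x) (hxy : x ≤ y) (hc : c ≤ 0) : y ^ c ≤ x ^ c :=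
  Real.rpow_le_rpow_of_nonpos hx hxy hc

lemma rpNonneg {x : ℝ} (hx : 0 ≤ x) (c : ℝ) : 0 ≤ x ^ c := Real.rpow_nonneg hx c

lemma one_le_two_abs (p : ℝ) : (1:ℝ) ≤ 2 ^ |p| := Real.one_le_rpow (by norm_num) (abs_nonneg p)

-- z ∈ [c/2, c] ⇒ z^p ≤ 2^|p| c^p
lemma mid_rpow (p : ℝ) {c z : ℝ} (hc : 0 < c) (h1 : c/2 ≤ z) (h2 : z ≤ c) :
    z ^ p ≤ 2 ^ |p| * c ^ p := by
  have hz : 0 < z := lt_of_lt_of_le (by linarith) h1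
  rcases le_or_gt 0 p with hp | hp
  · have h3 := Real.rpow_le_rpow hz.le h2 hp
    nlinarith [rpNonneg hc.le p, one_le_two_abs p]
  · have h3 : z ^ p ≤ (c/2) ^ p := rpAnti _ (by linarith) h1 hp.le
    refine h3.trans (le_of_eq ?_)
    rw [abs_of_neg hp, Real.div_rpow hc.le (by norm_num), div_eq_mul_inv,
      ← Real.rpow_neg (by norm_num : (0:ℝ) ≤ 2)]
    ring

-- z ∈ [c, 2c] ⇒ z^p ≤ 2^|p| c^p
lemma up_rpow (p : ℝ) {c z : ℝ} (hc : 0 < c) (h1 : c ≤ z) (h2 : z ≤ 2*c) :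
    z ^ p ≤ 2 ^ |p| * c ^ p := by
  rcases le_or_gt 0 p with hp | hp
  · have h3 : z ^ p ≤ (2*c) ^ p := Real.rpow_le_rpow (by linarith) h2 hp
    rw [Real.mul_rpow (by norm_num) hc.le, abs_of_nonneg hp] at *
    exact h3
  · have h3 : z ^ p ≤ c ^ p := rpAnti _ hc h1 hp.le
    nlinarith [rpNonneg hc.le p, one_le_two_abs p]

-- x ∈ [A/2, A] ⇒ x^(-b) ≤ 2^|b| * A^(-b)
lemma half_bound {x A : ℝ} (b : ℝ) (hA : 0 < A) (h1 : A/2 ≤ x) (h2 : x ≤ A) :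
    x ^ (-b) ≤ 2 ^ |b| * A ^ (-b) := by
  have := mid_rpow (-b) hA h1 h2
  rwa [abs_neg] at this

-- x ∈ [1, B] ⇒ x^(-b) ≤ B^|b|
lemma one_le_bound {x B : ℝ} (b : ℝ) (h1 : 1 ≤ x) (h2 : x ≤ B) : x ^ (-b) ≤ B ^ |b| := by
  rcases le_or_gt 0 b with hb | hb
  · have h3 : x ^ (-b) ≤ 1 := Real.rpow_le_one_of_one_le_of_nonpos h1 (by linarith)
    exact h3.trans (Real.one_le_rpow (by linarith) (abs_nonneg b))
  · have h3 : x ^ (-b) ≤ B ^ (-b) := Real.rpow_le_rpow (by linarith) h2 (by linarith)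
    rwa [abs_of_neg hb]

-- S ≤ c R ⇒ c^(-a) ≤ R^a * S^(-a)
lemma key_ratio (a : ℝ) (ha : 0 ≤ a) {R S c : ℝ} (hR : 0 < R) (hS : 0 < S) (hc : 0 < c)
    (h : S ≤ c * R) : c ^ (-a) ≤ R ^ a * S ^ (-a) := by
  have h1 : (c*R) ^ (-a) ≤ S ^ (-a) := rpAnti _ hS h (by linarith)
  rw [Real.mul_rpow hc.le hR.le] at h1
  have h2 : R ^ a * (c ^ (-a) * R ^ (-a)) = c ^ (-a) := by
    rw [mul_comm (c ^ (-a)) _, ← mul_assoc, ← Real.rpow_add hR]; simp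
  calc c ^ (-a) = R ^ a * (c ^ (-a) * R ^ (-a)) := h2.symm
    _ ≤ R ^ a * S ^ (-a) := mul_le_mul_of_nonneg_left h1 (rpNonneg hR.le a)

-- S ≤ c A ⇒ A^(-a) ≤ c^a * S^(-a)
lemma ratio_bound (a : ℝ) (ha : 0 ≤ a) {A S c : ℝ} (hA : 0 < A) (hS : 0 < S) (hc : 0 < c)
    (h : S ≤ c * A) : A ^ (-a) ≤ c ^ a * S ^ (-a) := by
  have h1 : (c*A) ^ (-a) ≤ S ^ (-a) := rpAnti _ hS h (by linarith)
  rw [Real.mul_rpow hc.le hA.le] at h1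
  have h2 : c ^ a * (c ^ (-a) * A ^ (-a)) = A ^ (-a) := by
    rw [← mul_assoc, ← Real.rpow_add hc]; simp
  calc A ^ (-a) = c ^ a * (c ^ (-a) * A ^ (-a)) := h2.symm
    _ ≤ c ^ a * S ^ (-a) := mul_le_mul_of_nonneg_left h1 (rpNonneg hc.le a)
lemma IL1 {a u v : ℝ} (ha : 0 < a) (hu : 0 ≤ u) (huv : u ≤ v) :
    ∫ z in u..v, z ^ (a-1) ≤ v ^ a / a := by
  rw [integral_rpow (Or.inl (by linarith : (-1:ℝ) < a - 1))]
  have e : a - 1 + 1 = a := by ring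
  rw [e]
  have h1 : 0 ≤ u ^ a := rpNonneg hu a
  have h2 : 0 ≤ v ^ a := rpNonneg (hu.trans huv) a
  gcongr <;> linarith

lemma IL2 {b₁ A u v : ℝ} (hb₁ : b₁ < 1) (huv : u ≤ v) (hvA : v ≤ A) :
    ∫ z in u..v, (A - z) ^ (-b₁) ≤ (A - u) ^ (1 - b₁) / (1 - b₁) := by
  have h := intervalIntegral.integral_comp_sub_left (a := u) (b := v) (fun x => x ^ (-b₁)) A
  rw [h, integral_rpow (Or.inl (by linarith : (-1:ℝ) < -b₁))]
  have e : -b₁ + 1 = 1 - b₁ := by ring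
  rw [e]
  have h1 : 0 ≤ (A - v) ^ (1 - b₁) := rpNonneg (by linarith) _
  have h2 : 0 ≤ (A - u) ^ (1 - b₁) := rpNonneg (by linarith) _
  gcongr <;> linarith

lemma IL3 {b₁ l u v : ℝ} (hb₁ : b₁ < 1) (huv : u ≤ v) (hul : l - 1 ≤ u) :
    ∫ z in u..v, (1 + z - l) ^ (-b₁) ≤ (1 + v - l) ^ (1 - b₁) / (1 - b₁) := by
  have e : ∀ z : ℝ, 1 + z - l = z + (1 - l) := fun z => by ring
  simp_rw [e]
  have h := intervalIntegral.integral_comp_add_right (a := u) (b := v) (fun x => x ^ (-b₁)) (1 - l)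
  rw [h, integral_rpow (Or.inl (by linarith : (-1:ℝ) < -b₁))]
  have e2 : -b₁ + 1 = 1 - b₁ := by ring
  rw [e2]
  have h1 : 0 ≤ (u + (1 - l)) ^ (1 - b₁) := rpNonneg (by linarith) _
  have h2 : 0 ≤ (v + (1 - l)) ^ (1 - b₁) := rpNonneg (by linarith) _
  gcongr <;> linarith

lemma IL4 {ν u v : ℝ} (hν : 0 < ν) (hu : 0 < u) (huv : u ≤ v) :
    ∫ z in u..v, z ^ (-1-ν) ≤ u ^ (-ν) / ν := by
  have h0 : (0:ℝ) ∉ Set.uIcc u v := by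
    rw [Set.uIcc_of_le huv]; intro hmem; exact absurd hmem.1 (not_le.mpr hu)
  rw [integral_rpow (Or.inr ⟨by intro h; nlinarith, h0⟩)]
  have e : -1 - ν + 1 = -ν := by ring
  rw [e]
  have h1 : 0 ≤ v ^ (-ν) := rpNonneg (by linarith) _
  have h2 : 0 ≤ u ^ (-ν) := rpNonneg hu.le _
  have e2 : (v ^ (-ν) - u ^ (-ν)) / (-ν) = (u ^ (-ν) - v ^ (-ν)) / ν := by
    rw [div_neg]; ring
  rw [e2]
  gcongr <;> linarith

lemma II_pow {p : ℝ} (hp : -1 < p) (u v : ℝ) :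
    IntervalIntegrable (fun z : ℝ => z ^ p) volume u v :=
  intervalIntegral.intervalIntegrable_rpow' hp

lemma II_Amz (b₁ : ℝ) {A u v : ℝ} (huv : u ≤ v) (hvA : v < A) :
    IntervalIntegrable (fun z : ℝ => (A - z) ^ (-b₁)) volume u v := by
  apply ContinuousOn.intervalIntegrable
  apply ContinuousOn.rpow_const (continuousOn_const.sub continuousOn_id)
  intro x hx
  rw [Set.uIcc_of_le huv] at hx
  exact Or.inl (ne_of_gt (by simp only [Set.mem_Icc] at hx; simp only [Pi.sub_apply, Pi.add_apply, id_eq] at *; linarith [hx.2]))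

lemma II_zml (b₁ : ℝ) {l u v : ℝ} (huv : u ≤ v) (hu : l - 1 < u) :
    IntervalIntegrable (fun z : ℝ => (1 + z - l) ^ (-b₁)) volume u v := by
  apply ContinuousOn.intervalIntegrable
  apply ContinuousOn.rpow_const ((continuousOn_const.add continuousOn_id).sub continuousOn_const)
  intro x hx
  rw [Set.uIcc_of_le huv] at hx
  exact Or.inl (ne_of_gt (by simp only [Set.mem_Icc] at hx; simp only [Pi.sub_apply, Pi.add_apply, id_eq] at *; linarith [hx.1]))

lemma II_inv (p : ℝ) {u v : ℝ} (hu : 0 < u) (huv : u ≤ v) :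
    IntervalIntegrable (fun z : ℝ => z ^ p) volume u v := by
  apply ContinuousOn.intervalIntegrable
  apply ContinuousOn.rpow_const continuousOn_id
  intro x hx
  rw [Set.uIcc_of_le huv] at hx
  exact Or.inl (ne_of_gt (by simp only [Set.mem_Icc] at hx; simp only [id] at *; linarith [hx.1]))

lemma lemB {a ν : ℝ} (ha : 0 < a) (hν : 0 < ν) {l R : ℝ} (hl : 0 ≤ l) (hR : 0 < R) :
    ∫ z in (0:ℝ)..R, z ^ (a-1) * (1 + l + z) ^ (-(a+ν)) ≤
      (2 ^ a * (1/a + 1/ν)) * (R ^ a * (1 + l + R) ^ (-a) * (1 + l) ^ (-ν)) := by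
  have hA : (0:ℝ) < 1 + l := by linarith
  have hS : (0:ℝ) < 1 + l + R := by linarith
  have hXnn : 0 ≤ R ^ a * (1 + l + R) ^ (-a) * (1 + l) ^ (-ν) := by
    have := rpNonneg hR.le a; have := rpNonneg hS.le (-a); have := rpNonneg hA.le (-ν)
    positivity
  -- integrability of the integrand on subintervals of [0,∞)
  have hIf : ∀ u v : ℝ, 0 ≤ u → u ≤ v →
      IntervalIntegrable (fun z : ℝ => z ^ (a-1) * (1 + l + z) ^ (-(a+ν))) volume u v := by
    intro u v hu huv
    apply (II_pow (by linarith : (-1:ℝ) < a - 1) u v).mul_continuousOn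
    apply ContinuousOn.rpow_const ((continuousOn_const.add continuousOn_id))
    intro x hx
    rw [Set.uIcc_of_le huv] at hx
    exact Or.inl (ne_of_gt (by simp only [Set.mem_Icc, id, Pi.add_apply, id_eq] at *; linarith [hx.1]))
  have hmono1 : ∀ u v : ℝ, 0 ≤ u → u ≤ v →
      ∫ z in u..v, z ^ (a-1) * (1 + l + z) ^ (-(a+ν)) ≤ (1+l) ^ (-(a+ν)) * (v ^ a / a) := by
    intro u v hu huv
    have comp : ∀ z ∈ Set.Icc u v, z ^ (a-1) * (1 + l + z) ^ (-(a+ν)) ≤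
        (1+l) ^ (-(a+ν)) * z ^ (a-1) := by
      intro z hz
      have hz0 : 0 ≤ z := hu.trans hz.1
      have h1 : (1 + l + z) ^ (-(a+ν)) ≤ (1+l) ^ (-(a+ν)) :=
        rpAnti _ hA (by linarith) (by linarith)
      have h2 : 0 ≤ z ^ (a-1) := rpNonneg hz0 _
      nlinarith [rpNonneg hA.le (-(a+ν))]
    calc ∫ z in u..v, z ^ (a-1) * (1 + l + z) ^ (-(a+ν))
        ≤ ∫ z in u..v, (1+l) ^ (-(a+ν)) * z ^ (a-1) := by
          apply intervalIntegral.integral_mono_on huv (hIf u v hu huv)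
            (((II_pow (by linarith) u v)).const_mul _) comp
      _ = (1+l) ^ (-(a+ν)) * ∫ z in u..v, z ^ (a-1) := intervalIntegral.integral_const_mul _ _
      _ ≤ (1+l) ^ (-(a+ν)) * (v ^ a / a) := by
          apply mul_le_mul_of_nonneg_left (IL1 ha hu huv) (rpNonneg hA.le _)
  rcases le_or_gt R (1+l) with hcase | hcase
  · -- R ≤ 1+l : single piece
    have h1 := hmono1 0 R le_rfl hR.le
    have key : (1+l) ^ (-a) ≤ 2 ^ a * (1 + l + R) ^ (-a) :=
      ratio_bound a ha.le hA hS (by norm_num) (by linarith)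
    have e1 : (1+l) ^ (-(a+ν)) = (1+l) ^ (-a) * (1+l) ^ (-ν) := by
      rw [← Real.rpow_add hA]; ring_nf
    have hRa : 0 ≤ R ^ a := rpNonneg hR.le a
    have hAν : 0 ≤ (1+l) ^ (-ν) := rpNonneg hA.le _
    have hAa : 0 ≤ (1+l) ^ (-a) := rpNonneg hA.le _
    have hSa : 0 ≤ (1 + l + R) ^ (-a) := rpNonneg hS.le _
    have h2a : (0:ℝ) ≤ 2 ^ a := rpNonneg (by norm_num) a
    calc ∫ z in (0:ℝ)..R, z ^ (a-1) * (1 + l + z) ^ (-(a+ν))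
        ≤ (1+l) ^ (-(a+ν)) * (R ^ a / a) := h1
      _ = (1/a) * (R ^ a * ((1+l) ^ (-a) * (1+l) ^ (-ν))) := by rw [e1]; ring
      _ ≤ (1/a) * (R ^ a * ((2 ^ a * (1 + l + R) ^ (-a)) * (1+l) ^ (-ν))) := by
          apply mul_le_mul_of_nonneg_left _ (by positivity)
          apply mul_le_mul_of_nonneg_left _ hRa
          exact mul_le_mul_of_nonneg_right key hAν
      _ = (2 ^ a * (1/a)) * (R ^ a * (1 + l + R) ^ (-a) * (1 + l) ^ (-ν)) := by ring
      _ ≤ (2 ^ a * (1/a + 1/ν)) * (R ^ a * (1 + l + R) ^ (-a) * (1 + l) ^ (-ν)) := by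
          apply mul_le_mul_of_nonneg_right _ hXnn
          have h1ν : 0 < 1/ν := by positivity
          nlinarith [mul_nonneg h2a (le_of_lt h1ν)]
  · -- 1+l < R : two pieces
    have hsplit := intervalIntegral.integral_add_adjacent_intervals
      (hIf 0 (1+l) le_rfl hA.le) (hIf (1+l) R hA.le hcase.le)
    rw [← hsplit]
    -- piece 1
    have p1 : ∫ z in (0:ℝ)..(1+l), z ^ (a-1) * (1 + l + z) ^ (-(a+ν)) ≤ (1+l) ^ (-ν) / a := by
      have h1 := hmono1 0 (1+l) le_rfl hA.le
      have e1 : (1+l) ^ (-(a+ν)) * ((1+l) ^ a / a) = (1+l) ^ (-ν) / a := by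
        rw [div_eq_mul_inv, div_eq_mul_inv, ← mul_assoc, ← Real.rpow_add hA]
        ring_nf
      linarith [h1, e1.le]
    -- piece 2
    have p2 : ∫ z in (1+l)..R, z ^ (a-1) * (1 + l + z) ^ (-(a+ν)) ≤ (1+l) ^ (-ν) / ν := by
      have comp : ∀ z ∈ Set.Icc (1+l) R, z ^ (a-1) * (1 + l + z) ^ (-(a+ν)) ≤ z ^ (-1-ν) := by
        intro z hz
        have hz0 : 0 < z := lt_of_lt_of_le hA hz.1
        have h1 : (1 + l + z) ^ (-(a+ν)) ≤ z ^ (-(a+ν)) :=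
          rpAnti _ hz0 (by linarith) (by linarith)
        have h2 : z ^ (a-1) * z ^ (-(a+ν)) = z ^ (-1-ν) := by
          rw [← Real.rpow_add hz0]; congr 1; ring
        calc z ^ (a-1) * (1 + l + z) ^ (-(a+ν)) ≤ z ^ (a-1) * z ^ (-(a+ν)) :=
              mul_le_mul_of_nonneg_left h1 (rpNonneg hz0.le _)
          _ = z ^ (-1-ν) := h2
      calc ∫ z in (1+l)..R, z ^ (a-1) * (1 + l + z) ^ (-(a+ν))
          ≤ ∫ z in (1+l)..R, z ^ (-1-ν) := by
            apply intervalIntegral.integral_mono_on hcase.le (hIf (1+l) R hA.le hcase.le)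
              (II_inv _ hA hcase.le) comp
        _ ≤ (1+l) ^ (-ν) / ν := IL4 hν hA hcase.le
    have key : (2:ℝ) ^ (-a) ≤ R ^ a * (1 + l + R) ^ (-a) :=
      key_ratio a ha.le hR hS (by norm_num) (by linarith)
    have htwo : (2:ℝ) ^ a * 2 ^ (-a) = 1 := by
      rw [← Real.rpow_add (by norm_num : (0:ℝ) < 2)]; norm_num
    have hAν : 0 ≤ (1+l) ^ (-ν) := rpNonneg hA.le _
    have h2a : (0:ℝ) < 2 ^ a := Real.rpow_pos_of_pos (by norm_num) a
    have hfin : (1+l) ^ (-ν) / a + (1+l) ^ (-ν) / ν ≤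
        (2 ^ a * (1/a + 1/ν)) * (R ^ a * (1 + l + R) ^ (-a) * (1 + l) ^ (-ν)) := by
      have hYnn : 0 ≤ (1/a + 1/ν) * (1+l) ^ (-ν) := by
        apply mul_nonneg (by positivity) hAν
      calc (1+l) ^ (-ν) / a + (1+l) ^ (-ν) / ν = (1/a + 1/ν) * (1+l) ^ (-ν) := by
            field_simp
        _ = 2 ^ a * (2 ^ (-a) * ((1/a + 1/ν) * (1+l) ^ (-ν))) := by
            rw [← mul_assoc, htwo, one_mul]
        _ ≤ 2 ^ a * ((R ^ a * (1 + l + R) ^ (-a)) * ((1/a + 1/ν) * (1+l) ^ (-ν))) := by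
            apply mul_le_mul_of_nonneg_left (mul_le_mul_of_nonneg_right key hYnn) h2a.le
        _ = (2 ^ a * (1/a + 1/ν)) * (R ^ a * (1 + l + R) ^ (-a) * (1 + l) ^ (-ν)) := by ring
    linarith [p1, p2, hfin]

set_option maxHeartbeats 1000000

section lemAsec
variable {a ν b₁ b₂ : ℝ}

lemma rpow_cancel {c : ℝ} (hc : 0 < c) (p : ℝ) : c ^ p * c ^ (-p) = 1 := by
  rw [← Real.rpow_add hc]; simp

lemma lemA (ha : 0 < a) (hν : 0 < ν) (hb₁ : b₁ < 1) (hb : b₁ + b₂ = a + ν) :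
    ∃ C : ℝ, 0 < C ∧ ∀ l R : ℝ, 0 ≤ l → 0 < R →
      ∫ z in (0:ℝ)..R, z ^ (a-1) * ((1 + |z - l|) ^ (-b₁) * (max (1 + |z - l|) (1 + l)) ^ (-b₂))
        ≤ C * (R ^ a * (1 + l + R) ^ (-a) * (1 + l) ^ (-ν)) := by
  have hq : 0 < 1 - b₁ := by linarith
  set c1 : ℝ := 2 ^ |b₁| * (3/2) ^ a / a with hc1
  set c2 : ℝ := 4 ^ |b₁| * 4 ^ |b₂| / a * 4 ^ a * 2 ^ ν with hc2
  set c3 : ℝ := (4 ^ |b₁| * 4 ^ |b₂| * 2 ^ a / a + 2 ^ (a+ν) * 2 ^ (-ν) / ν) * 2 ^ a * 2 ^ ν with hc3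
  set D : ℝ := 2 ^ |b₁| / a + 2 * (2 ^ |a-1| * 2 ^ |a-1| / (1 - b₁)) + 2 ^ (a+ν) * 2 ^ ν / ν with hD
  set c4 : ℝ := 5 ^ a * D with hc4
  have hDpos : 0 < D := by
    have := Real.rpow_pos_of_pos (show (0:ℝ) < 2 by norm_num) |b₁|
    have := Real.rpow_pos_of_pos (show (0:ℝ) < 2 by norm_num) |a-1|
    have := Real.rpow_pos_of_pos (show (0:ℝ) < 2 by norm_num) (a+ν)
    have := Real.rpow_pos_of_pos (show (0:ℝ) < 2 by norm_num) ν
    positivity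
  have hCpos : 0 < c1 + c2 + c3 + c4 := by
    have h2b := Real.rpow_pos_of_pos (show (0:ℝ) < 2 by norm_num) |b₁|
    have h4b := Real.rpow_pos_of_pos (show (0:ℝ) < 4 by norm_num) |b₁|
    have h4b2 := Real.rpow_pos_of_pos (show (0:ℝ) < 4 by norm_num) |b₂|
    have h32 := Real.rpow_pos_of_pos (show (0:ℝ) < 3/2 by norm_num) a
    have h4a := Real.rpow_pos_of_pos (show (0:ℝ) < 4 by norm_num) a
    have h2ν := Real.rpow_pos_of_pos (show (0:ℝ) < 2 by norm_num) ν
    have h2a := Real.rpow_pos_of_pos (show (0:ℝ) < 2 by norm_num) a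
    have h2aν := Real.rpow_pos_of_pos (show (0:ℝ) < 2 by norm_num) (a+ν)
    have h2mν := Real.rpow_pos_of_pos (show (0:ℝ) < 2 by norm_num) (-ν)
    have h5a := Real.rpow_pos_of_pos (show (0:ℝ) < 5 by norm_num) a
    positivity
  refine ⟨c1 + c2 + c3 + c4, hCpos, ?_⟩
  intro l R hl hR
  set f : ℝ → ℝ := fun z => z ^ (a-1) * ((1 + |z - l|) ^ (-b₁) * (max (1 + |z - l|) (1 + l)) ^ (-b₂)) with hf
  have hA : (0:ℝ) < 1 + l := by linarith
  have hS : (0:ℝ) < 1 + l + R := by linarith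
  have hRa : 0 ≤ R ^ a := rpNonneg hR.le a
  have hSa : 0 ≤ (1 + l + R) ^ (-a) := rpNonneg hS.le _
  have hAν : 0 ≤ (1 + l) ^ (-ν) := rpNonneg hA.le _
  have hXnn : 0 ≤ R ^ a * (1 + l + R) ^ (-a) * (1 + l) ^ (-ν) := by positivity
  -- continuity of the non-power factor
  have hbase : Continuous fun z : ℝ => 1 + |z - l| :=
    continuous_const.add (continuous_id.sub continuous_const).abs
  have hbase1 : ∀ z : ℝ, 1 ≤ 1 + |z - l| := fun z => by
    have := abs_nonneg (z - l); linarith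
  have hg : Continuous (fun z : ℝ => (1 + |z - l|) ^ (-b₁) * (max (1 + |z - l|) (1 + l)) ^ (-b₂)) := by
    apply Continuous.mul
    · exact hbase.rpow_const (fun x => Or.inl (by have := hbase1 x; linarith))
    · exact (hbase.max continuous_const).rpow_const
        (fun x => Or.inl (by have := hbase1 x; have := le_max_left (1 + |x - l|) (1+l); linarith))
  have hfI : ∀ u v : ℝ, IntervalIntegrable f volume u v := fun u v =>
    (II_pow (by linarith : (-1:ℝ) < a - 1) u v).mul_continuousOn hg.continuousOn
  -- Piece 1 : on [0, m] with m ≤ l/2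
  have hp1 : ∀ m : ℝ, 0 ≤ m → m ≤ l/2 →
      ∫ z in (0:ℝ)..m, f z ≤ 2 ^ |b₁| / a * (m ^ a * ((1+l) ^ (-b₁) * (1+l) ^ (-b₂))) := by
    intro m hm hml
    have comp : ∀ z ∈ Set.Icc (0:ℝ) m, f z ≤
        (2 ^ |b₁| * ((1+l) ^ (-b₁) * (1+l) ^ (-b₂))) * z ^ (a-1) := by
      intro z hz
      have hz0 : 0 ≤ z := hz.1
      have hzl : z ≤ l/2 := hz.2.trans hml
      have e1 : 1 + |z - l| = 1 + l - z := by
        rw [abs_of_nonpos (by linarith)]; ring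
      have e2 : max (1 + |z - l|) (1 + l) = 1 + l := by
        apply max_eq_right; rw [e1]; linarith
      have h1 : (1 + l - z) ^ (-b₁) ≤ 2 ^ |b₁| * (1+l) ^ (-b₁) :=
        half_bound b₁ hA (by linarith) (by linarith)
      have h2 : 0 ≤ (1+l) ^ (-b₂) := rpNonneg hA.le _
      have h3 : 0 ≤ z ^ (a-1) := rpNonneg hz0 _
      rw [hf]; simp only []; rw [e2, e1]
      calc z ^ (a-1) * ((1 + l - z) ^ (-b₁) * (1+l) ^ (-b₂))
          ≤ z ^ (a-1) * ((2 ^ |b₁| * (1+l) ^ (-b₁)) * (1+l) ^ (-b₂)) := by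
            apply mul_le_mul_of_nonneg_left (mul_le_mul_of_nonneg_right h1 h2) h3
        _ = (2 ^ |b₁| * ((1+l) ^ (-b₁) * (1+l) ^ (-b₂))) * z ^ (a-1) := by ring
    calc ∫ z in (0:ℝ)..m, f z
        ≤ ∫ z in (0:ℝ)..m, (2 ^ |b₁| * ((1+l) ^ (-b₁) * (1+l) ^ (-b₂))) * z ^ (a-1) := by
          apply intervalIntegral.integral_mono_on hm (hfI 0 m)
            ((II_pow (by linarith) 0 m).const_mul _) comp
      _ = (2 ^ |b₁| * ((1+l) ^ (-b₁) * (1+l) ^ (-b₂))) * ∫ z in (0:ℝ)..m, z ^ (a-1) :=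
          intervalIntegral.integral_const_mul _ _
      _ ≤ (2 ^ |b₁| * ((1+l) ^ (-b₁) * (1+l) ^ (-b₂))) * (m ^ a / a) := by
          apply mul_le_mul_of_nonneg_left (IL1 ha le_rfl hm)
          have := one_le_two_abs b₁
          have := rpNonneg hA.le (-b₁); have := rpNonneg hA.le (-b₂); positivity
      _ = 2 ^ |b₁| / a * (m ^ a * ((1+l) ^ (-b₁) * (1+l) ^ (-b₂))) := by ring
  -- Piece 2 : on [l/2, m], m ≤ l, requires 1 ≤ l
  have hp2 : 1 ≤ l → ∀ m : ℝ, l/2 ≤ m → m ≤ l →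
      ∫ z in (l/2)..m, f z ≤ (2 ^ |a-1| * 2 ^ |a-1| / (1 - b₁)) * (1 + l) ^ (-ν) := by
    intro hl1 m hm hml
    have hl0 : 0 < l := by linarith
    have hKnn : 0 ≤ 2 ^ |a-1| * l ^ (a-1) * (1+l) ^ (-b₂) := by
      have := rpNonneg hl0.le (a-1); have := rpNonneg hA.le (-b₂)
      have := one_le_two_abs (a-1); positivity
    have comp : ∀ z ∈ Set.Icc (l/2) m, f z ≤
        (2 ^ |a-1| * l ^ (a-1) * (1+l) ^ (-b₂)) * (1 + l - z) ^ (-b₁) := by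
      intro z hz
      have hz0 : 0 ≤ z := le_trans (by linarith) hz.1
      have hzl : z ≤ l := hz.2.trans hml
      have e1 : 1 + |z - l| = 1 + l - z := by
        rw [abs_of_nonpos (by linarith)]; ring
      have e2 : max (1 + |z - l|) (1 + l) = 1 + l := by
        apply max_eq_right; rw [e1]; linarith
      have h1 : z ^ (a-1) ≤ 2 ^ |a-1| * l ^ (a-1) := mid_rpow (a-1) hl0 hz.1 hzl
      have h2 : 0 ≤ (1 + l - z) ^ (-b₁) := rpNonneg (by linarith) _
      have h3 : 0 ≤ (1+l) ^ (-b₂) := rpNonneg hA.le _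
      rw [hf]; simp only []; rw [e2, e1]
      calc z ^ (a-1) * ((1 + l - z) ^ (-b₁) * (1+l) ^ (-b₂))
          ≤ (2 ^ |a-1| * l ^ (a-1)) * ((1 + l - z) ^ (-b₁) * (1+l) ^ (-b₂)) :=
            mul_le_mul_of_nonneg_right h1 (mul_nonneg h2 h3)
        _ = (2 ^ |a-1| * l ^ (a-1) * (1+l) ^ (-b₂)) * (1 + l - z) ^ (-b₁) := by ring
    have ecol : (1+l) ^ (a-1) * ((1+l) ^ (1-b₁) * (1+l) ^ (-b₂)) = (1+l) ^ (-ν) := by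
      rw [← Real.rpow_add hA, ← Real.rpow_add hA]; congr 1; linarith
    calc ∫ z in (l/2)..m, f z
        ≤ ∫ z in (l/2)..m, (2 ^ |a-1| * l ^ (a-1) * (1+l) ^ (-b₂)) * (1 + l - z) ^ (-b₁) := by
          apply intervalIntegral.integral_mono_on hm (hfI _ _)
            ((II_Amz b₁ hm (by linarith : m < 1 + l)).const_mul _) comp
      _ = (2 ^ |a-1| * l ^ (a-1) * (1+l) ^ (-b₂)) * ∫ z in (l/2)..m, (1 + l - z) ^ (-b₁) :=
          intervalIntegral.integral_const_mul _ _
      _ ≤ (2 ^ |a-1| * l ^ (a-1) * (1+l) ^ (-b₂)) * ((1 + l - l/2) ^ (1-b₁) / (1-b₁)) :=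
          mul_le_mul_of_nonneg_left (IL2 hb₁ hm (by linarith)) hKnn
      _ ≤ (2 ^ |a-1| * l ^ (a-1) * (1+l) ^ (-b₂)) * ((1 + l) ^ (1-b₁) / (1-b₁)) := by
          apply mul_le_mul_of_nonneg_left _ hKnn
          have hstep : (1 + l - l/2) ^ (1-b₁) ≤ (1 + l) ^ (1-b₁) :=
            Real.rpow_le_rpow (by linarith) (by linarith) (by linarith)
          gcongr
      _ = l ^ (a-1) * (2 ^ |a-1| * ((1+l) ^ (1-b₁) * (1+l) ^ (-b₂)) / (1-b₁)) := by ring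
      _ ≤ (2 ^ |a-1| * (1+l) ^ (a-1)) * (2 ^ |a-1| * ((1+l) ^ (1-b₁) * (1+l) ^ (-b₂)) / (1-b₁)) := by
          apply mul_le_mul_of_nonneg_right (mid_rpow (a-1) hA (by linarith) (by linarith))
          have := rpNonneg hA.le (1-b₁); have := rpNonneg hA.le (-b₂)
          have := one_le_two_abs (a-1); positivity
      _ = (2 ^ |a-1| * 2 ^ |a-1| / (1-b₁)) * ((1+l) ^ (a-1) * ((1+l) ^ (1-b₁) * (1+l) ^ (-b₂))) := by
          ring
      _ = (2 ^ |a-1| * 2 ^ |a-1| / (1 - b₁)) * (1 + l) ^ (-ν) := by rw [ecol]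
  -- Piece 3 : on [l, m], m ≤ 2l, requires 1 ≤ l
  have hp3 : 1 ≤ l → ∀ m : ℝ, l ≤ m → m ≤ 2*l →
      ∫ z in l..m, f z ≤ (2 ^ |a-1| * 2 ^ |a-1| / (1 - b₁)) * (1 + l) ^ (-ν) := by
    intro hl1 m hm hml
    have hl0 : 0 < l := by linarith
    have hKnn : 0 ≤ 2 ^ |a-1| * l ^ (a-1) * (1+l) ^ (-b₂) := by
      have := rpNonneg hl0.le (a-1); have := rpNonneg hA.le (-b₂)
      have := one_le_two_abs (a-1); positivity
    have comp : ∀ z ∈ Set.Icc l m, f z ≤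
        (2 ^ |a-1| * l ^ (a-1) * (1+l) ^ (-b₂)) * (1 + z - l) ^ (-b₁) := by
      intro z hz
      have hz1 : l ≤ z := hz.1
      have hzl : z ≤ 2*l := hz.2.trans hml
      have e1 : 1 + |z - l| = 1 + z - l := by
        rw [abs_of_nonneg (by linarith [hz1])]; ring
      have e2 : max (1 + |z - l|) (1 + l) = 1 + l := by
        apply max_eq_right; rw [e1]; linarith
      have h1 : z ^ (a-1) ≤ 2 ^ |a-1| * l ^ (a-1) := up_rpow (a-1) hl0 hz.1 hzl
      have h2 : 0 ≤ (1 + z - l) ^ (-b₁) := rpNonneg (by linarith [hz1]) _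
      have h3 : 0 ≤ (1+l) ^ (-b₂) := rpNonneg hA.le _
      rw [hf]; simp only []; rw [e2, e1]
      calc z ^ (a-1) * ((1 + z - l) ^ (-b₁) * (1+l) ^ (-b₂))
          ≤ (2 ^ |a-1| * l ^ (a-1)) * ((1 + z - l) ^ (-b₁) * (1+l) ^ (-b₂)) :=
            mul_le_mul_of_nonneg_right h1 (mul_nonneg h2 h3)
        _ = (2 ^ |a-1| * l ^ (a-1) * (1+l) ^ (-b₂)) * (1 + z - l) ^ (-b₁) := by ring
    have ecol : (1+l) ^ (a-1) * ((1+l) ^ (1-b₁) * (1+l) ^ (-b₂)) = (1+l) ^ (-ν) := by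
      rw [← Real.rpow_add hA, ← Real.rpow_add hA]; congr 1; linarith
    calc ∫ z in l..m, f z
        ≤ ∫ z in l..m, (2 ^ |a-1| * l ^ (a-1) * (1+l) ^ (-b₂)) * (1 + z - l) ^ (-b₁) := by
          apply intervalIntegral.integral_mono_on hm (hfI _ _)
            ((II_zml b₁ hm (by linarith : l - 1 < l)).const_mul _) comp
      _ = (2 ^ |a-1| * l ^ (a-1) * (1+l) ^ (-b₂)) * ∫ z in l..m, (1 + z - l) ^ (-b₁) :=
          intervalIntegral.integral_const_mul _ _
      _ ≤ (2 ^ |a-1| * l ^ (a-1) * (1+l) ^ (-b₂)) * ((1 + m - l) ^ (1-b₁) / (1-b₁)) :=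
          mul_le_mul_of_nonneg_left (IL3 hb₁ hm (by linarith)) hKnn
      _ ≤ (2 ^ |a-1| * l ^ (a-1) * (1+l) ^ (-b₂)) * ((1 + l) ^ (1-b₁) / (1-b₁)) := by
          apply mul_le_mul_of_nonneg_left _ hKnn
          have hstep : (1 + m - l) ^ (1-b₁) ≤ (1 + l) ^ (1-b₁) :=
            Real.rpow_le_rpow (by linarith) (by linarith) (by linarith)
          gcongr
      _ = l ^ (a-1) * (2 ^ |a-1| * ((1+l) ^ (1-b₁) * (1+l) ^ (-b₂)) / (1-b₁)) := by ring
      _ ≤ (2 ^ |a-1| * (1+l) ^ (a-1)) * (2 ^ |a-1| * ((1+l) ^ (1-b₁) * (1+l) ^ (-b₂)) / (1-b₁)) := by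
          apply mul_le_mul_of_nonneg_right (mid_rpow (a-1) hA (by linarith) (by linarith))
          have := rpNonneg hA.le (1-b₁); have := rpNonneg hA.le (-b₂)
          have := one_le_two_abs (a-1); positivity
      _ = (2 ^ |a-1| * 2 ^ |a-1| / (1-b₁)) * ((1+l) ^ (a-1) * ((1+l) ^ (1-b₁) * (1+l) ^ (-b₂))) := by
          ring
      _ = (2 ^ |a-1| * 2 ^ |a-1| / (1 - b₁)) * (1 + l) ^ (-ν) := by rw [ecol]
  -- Piece 4 : on [2l, R], requires 1 ≤ l
  have hp4 : 1 ≤ l → 2*l ≤ R →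
      ∫ z in (2*l)..R, f z ≤ (2 ^ (a+ν) * 2 ^ ν / ν) * (1 + l) ^ (-ν) := by
    intro hl1 h2lR
    have hl0 : 0 < l := by linarith
    have comp : ∀ z ∈ Set.Icc (2*l) R, f z ≤ 2 ^ (a+ν) * z ^ (-1-ν) := by
      intro z hz
      have hz1 : 2*l ≤ z := hz.1
      have hz2 : 2 ≤ z := by linarith
      have hz0 : (0:ℝ) < z := by linarith
      have e1 : 1 + |z - l| = 1 + z - l := by
        rw [abs_of_nonneg (by linarith [hz1])]; ring
      have e2 : max (1 + |z - l|) (1 + l) = 1 + |z - l| := by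
        apply max_eq_left; rw [e1]; linarith [hz1]
      have hbpos : (0:ℝ) < 1 + z - l := by linarith
      have ecmb : (1 + z - l) ^ (-b₁) * (1 + z - l) ^ (-b₂) = (1 + z - l) ^ (-(a+ν)) := by
        rw [← Real.rpow_add hbpos]; congr 1; linarith
      have h1 : (1 + z - l) ^ (-(a+ν)) ≤ (z/2) ^ (-(a+ν)) :=
        rpAnti _ (by linarith) (by linarith [hz1]) (by linarith)
      have h2 : (z/2) ^ (-(a+ν)) = 2 ^ (a+ν) * z ^ (-(a+ν)) := by
        rw [Real.div_rpow hz0.le (by norm_num), div_eq_mul_inv,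
          ← Real.rpow_neg (by norm_num : (0:ℝ) ≤ 2), neg_neg]
        ring
      have h3 : z ^ (a-1) * z ^ (-(a+ν)) = z ^ (-1-ν) := by
        rw [← Real.rpow_add hz0]; congr 1; ring
      have h4 : 0 ≤ z ^ (a-1) := rpNonneg hz0.le _
      rw [hf]; simp only []; rw [e2, e1, ecmb]
      calc z ^ (a-1) * (1 + z - l) ^ (-(a+ν))
          ≤ z ^ (a-1) * (z/2) ^ (-(a+ν)) := mul_le_mul_of_nonneg_left h1 h4
        _ = 2 ^ (a+ν) * (z ^ (a-1) * z ^ (-(a+ν))) := by rw [h2]; ring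
        _ = 2 ^ (a+ν) * z ^ (-1-ν) := by rw [h3]
    have h2aν : (0:ℝ) ≤ 2 ^ (a+ν) := rpNonneg (by norm_num) _
    calc ∫ z in (2*l)..R, f z
        ≤ ∫ z in (2*l)..R, 2 ^ (a+ν) * z ^ (-1-ν) := by
          apply intervalIntegral.integral_mono_on h2lR (hfI _ _)
            ((II_inv (-1-ν) (by linarith) h2lR).const_mul _) comp
      _ = 2 ^ (a+ν) * ∫ z in (2*l)..R, z ^ (-1-ν) := intervalIntegral.integral_const_mul _ _
      _ ≤ 2 ^ (a+ν) * ((2*l) ^ (-ν) / ν) :=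
          mul_le_mul_of_nonneg_left (IL4 hν (by linarith) h2lR) h2aν
      _ ≤ 2 ^ (a+ν) * ((2 ^ ν * (1+l) ^ (-ν)) / ν) := by
          apply mul_le_mul_of_nonneg_left _ h2aν
          gcongr
          calc (2*l) ^ (-ν) ≤ l ^ (-ν) := rpAnti _ hl0 (by linarith) (by linarith)
            _ ≤ 2 ^ |ν| * (1+l) ^ (-ν) := half_bound ν hA (by linarith) (by linarith)
            _ = 2 ^ ν * (1+l) ^ (-ν) := by rw [abs_of_nonneg hν.le]
      _ = (2 ^ (a+ν) * 2 ^ ν / ν) * (1 + l) ^ (-ν) := by ring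
  -- positivity of constant pieces
  have hc1p : 0 < c1 := by
    have := Real.rpow_pos_of_pos (show (0:ℝ) < 2 by norm_num) |b₁|
    have := Real.rpow_pos_of_pos (show (0:ℝ) < 3/2 by norm_num) a
    rw [hc1]; positivity
  have hc2p : 0 < c2 := by
    have := Real.rpow_pos_of_pos (show (0:ℝ) < 4 by norm_num) |b₁|
    have := Real.rpow_pos_of_pos (show (0:ℝ) < 4 by norm_num) |b₂|
    have := Real.rpow_pos_of_pos (show (0:ℝ) < 4 by norm_num) a
    have := Real.rpow_pos_of_pos (show (0:ℝ) < 2 by norm_num) ν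
    rw [hc2]; positivity
  have hc3p : 0 < c3 := by
    have := Real.rpow_pos_of_pos (show (0:ℝ) < 4 by norm_num) |b₁|
    have := Real.rpow_pos_of_pos (show (0:ℝ) < 4 by norm_num) |b₂|
    have := Real.rpow_pos_of_pos (show (0:ℝ) < 2 by norm_num) a
    have := Real.rpow_pos_of_pos (show (0:ℝ) < 2 by norm_num) ν
    have := Real.rpow_pos_of_pos (show (0:ℝ) < 2 by norm_num) (a+ν)
    have := Real.rpow_pos_of_pos (show (0:ℝ) < 2 by norm_num) (-ν)
    rw [hc3]; positivity
  have hc4p : 0 < c4 := by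
    have := Real.rpow_pos_of_pos (show (0:ℝ) < 5 by norm_num) a
    rw [hc4]; positivity
  -- crude pointwise bound for small z and small l
  have compcrude : ∀ z : ℝ, 0 ≤ z → z ≤ 2 → l ≤ 1 →
      f z ≤ (4 ^ |b₁| * 4 ^ |b₂|) * z ^ (a-1) := by
    intro z hz0 hz2 hll
    have habs : |z - l| ≤ 2 := abs_le.mpr ⟨by linarith, by linarith⟩
    have h1 : (1 + |z - l|) ^ (-b₁) ≤ 4 ^ |b₁| := one_le_bound b₁ (hbase1 z) (by linarith)
    have hmx1 : 1 ≤ max (1 + |z - l|) (1 + l) := le_trans (hbase1 z) (le_max_left _ _)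
    have hmx4 : max (1 + |z - l|) (1 + l) ≤ 4 := max_le (by linarith) (by linarith)
    have h2 : (max (1 + |z - l|) (1 + l)) ^ (-b₂) ≤ 4 ^ |b₂| := one_le_bound b₂ hmx1 hmx4
    have h3 : 0 ≤ z ^ (a-1) := rpNonneg hz0 _
    rw [hf]; simp only []
    calc z ^ (a-1) * ((1 + |z - l|) ^ (-b₁) * (max (1 + |z - l|) (1 + l)) ^ (-b₂))
        ≤ z ^ (a-1) * (4 ^ |b₁| * 4 ^ |b₂|) := by
          apply mul_le_mul_of_nonneg_left _ h3
          exact mul_le_mul h1 h2 (rpNonneg (le_trans zero_le_one hmx1) _)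
            (rpNonneg (by norm_num) _)
      _ = (4 ^ |b₁| * 4 ^ |b₂|) * z ^ (a-1) := by ring
  -- final comparison helper
  have hfinC : ∀ c : ℝ, 0 < c → c ≤ c1 + c2 + c3 + c4 →
      ∀ I : ℝ, I ≤ c * (R ^ a * (1 + l + R) ^ (-a) * (1 + l) ^ (-ν)) →
      I ≤ (c1 + c2 + c3 + c4) * (R ^ a * (1 + l + R) ^ (-a) * (1 + l) ^ (-ν)) := by
    intro c hc hcle I hI
    exact hI.trans (mul_le_mul_of_nonneg_right hcle hXnn)
  rcases le_or_gt l 1 with hll | hll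
  · rcases le_or_gt R 2 with hR2 | hR2
    · -- case (a)
      apply hfinC c2 hc2p (by linarith) _
      have h4 : (4:ℝ) ^ (-a) ≤ (1 + l + R) ^ (-a) := rpAnti _ hS (by linarith) (by linarith)
      have h5 : (2:ℝ) ^ (-ν) ≤ (1 + l) ^ (-ν) := rpAnti _ hA (by linarith) (by linarith)
      have h44 : (4:ℝ) ^ a * 4 ^ (-a) = 1 := rpow_cancel (by norm_num) a
      have h22 : (2:ℝ) ^ ν * 2 ^ (-ν) = 1 := rpow_cancel (by norm_num) ν
      have hK : 0 ≤ (4:ℝ) ^ |b₁| * 4 ^ |b₂| :=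
        mul_nonneg (rpNonneg (by norm_num) _) (rpNonneg (by norm_num) _)
      calc ∫ z in (0:ℝ)..R, f z
          ≤ ∫ z in (0:ℝ)..R, (4 ^ |b₁| * 4 ^ |b₂|) * z ^ (a-1) := by
            apply intervalIntegral.integral_mono_on hR.le (hfI _ _)
              ((II_pow (by linarith) _ _).const_mul _)
            intro z hz; exact compcrude z hz.1 (hz.2.trans hR2) hll
        _ = (4 ^ |b₁| * 4 ^ |b₂|) * ∫ z in (0:ℝ)..R, z ^ (a-1) :=
            intervalIntegral.integral_const_mul _ _
        _ ≤ (4 ^ |b₁| * 4 ^ |b₂|) * (R ^ a / a) :=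
            mul_le_mul_of_nonneg_left (IL1 ha le_rfl hR.le) hK
        _ = c2 * (R ^ a * (4 ^ (-a) * 2 ^ (-ν))) := by
            rw [hc2]
            rw [show (4:ℝ) ^ |b₁| * 4 ^ |b₂| / a * 4 ^ a * 2 ^ ν * (R ^ a * (4 ^ (-a) * 2 ^ (-ν)))
              = (4 ^ |b₁| * 4 ^ |b₂| * (R ^ a / a)) * ((4 ^ a * 4 ^ (-a)) * (2 ^ ν * 2 ^ (-ν)))
              from by ring, h44, h22]
            ring
        _ ≤ c2 * (R ^ a * (1 + l + R) ^ (-a) * (1 + l) ^ (-ν)) := by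
            apply mul_le_mul_of_nonneg_left _ hc2p.le
            calc R ^ a * (4 ^ (-a) * 2 ^ (-ν))
                ≤ R ^ a * ((1 + l + R) ^ (-a) * (1 + l) ^ (-ν)) := by
                  apply mul_le_mul_of_nonneg_left _ hRa
                  exact mul_le_mul h4 h5 (rpNonneg (by norm_num) _) hSa
              _ = R ^ a * (1 + l + R) ^ (-a) * (1 + l) ^ (-ν) := by ring
    · -- case (b)
      apply hfinC c3 hc3p (by linarith) _
      have comp4 : ∀ z ∈ Set.Icc (2:ℝ) R, f z ≤ 2 ^ (a+ν) * z ^ (-1-ν) := by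
        intro z hz
        have hz2 : 2 ≤ z := hz.1
        have hz0 : (0:ℝ) < z := by linarith
        have e1 : 1 + |z - l| = 1 + z - l := by
          rw [abs_of_nonneg (by linarith)]; ring
        have e2 : max (1 + |z - l|) (1 + l) = 1 + |z - l| := by
          apply max_eq_left; rw [e1]; linarith
        have hbpos : (0:ℝ) < 1 + z - l := by linarith
        have ecmb : (1 + z - l) ^ (-b₁) * (1 + z - l) ^ (-b₂) = (1 + z - l) ^ (-(a+ν)) := by
          rw [← Real.rpow_add hbpos]; congr 1; linarith
        have h1 : (1 + z - l) ^ (-(a+ν)) ≤ (z/2) ^ (-(a+ν)) :=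
          rpAnti _ (by linarith) (by linarith) (by linarith)
        have h2 : (z/2) ^ (-(a+ν)) = 2 ^ (a+ν) * z ^ (-(a+ν)) := by
          rw [Real.div_rpow hz0.le (by norm_num), div_eq_mul_inv,
            ← Real.rpow_neg (by norm_num : (0:ℝ) ≤ 2), neg_neg]
          ring
        have h3 : z ^ (a-1) * z ^ (-(a+ν)) = z ^ (-1-ν) := by
          rw [← Real.rpow_add hz0]; congr 1; ring
        have h4 : 0 ≤ z ^ (a-1) := rpNonneg hz0.le _
        rw [hf]; simp only []; rw [e2, e1, ecmb]
        calc z ^ (a-1) * (1 + z - l) ^ (-(a+ν))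
            ≤ z ^ (a-1) * (z/2) ^ (-(a+ν)) := mul_le_mul_of_nonneg_left h1 h4
          _ = 2 ^ (a+ν) * (z ^ (a-1) * z ^ (-(a+ν))) := by rw [h2]; ring
          _ = 2 ^ (a+ν) * z ^ (-1-ν) := by rw [h3]
      have h2aν : (0:ℝ) ≤ 2 ^ (a+ν) := rpNonneg (by norm_num) _
      have pA : ∫ z in (0:ℝ)..2, f z ≤ 4 ^ |b₁| * 4 ^ |b₂| * (2 ^ a / a) := by
        have hK : 0 ≤ (4:ℝ) ^ |b₁| * 4 ^ |b₂| :=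
          mul_nonneg (rpNonneg (by norm_num) _) (rpNonneg (by norm_num) _)
        calc ∫ z in (0:ℝ)..2, f z
            ≤ ∫ z in (0:ℝ)..2, (4 ^ |b₁| * 4 ^ |b₂|) * z ^ (a-1) := by
              apply intervalIntegral.integral_mono_on (by norm_num) (hfI _ _)
                ((II_pow (by linarith) _ _).const_mul _)
              intro z hz; exact compcrude z hz.1 hz.2 hll
          _ = (4 ^ |b₁| * 4 ^ |b₂|) * ∫ z in (0:ℝ)..2, z ^ (a-1) :=
              intervalIntegral.integral_const_mul _ _
          _ ≤ 4 ^ |b₁| * 4 ^ |b₂| * (2 ^ a / a) := by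
              apply mul_le_mul_of_nonneg_left _ hK
              have := IL1 (a := a) ha (le_refl 0) (by norm_num : (0:ℝ) ≤ 2)
              calc ∫ z in (0:ℝ)..2, z ^ (a-1) ≤ (2:ℝ) ^ a / a := this
                _ = 2 ^ a / a := by norm_num
      have pB : ∫ z in (2:ℝ)..R, f z ≤ 2 ^ (a+ν) * (2 ^ (-ν) / ν) := by
        calc ∫ z in (2:ℝ)..R, f z
            ≤ ∫ z in (2:ℝ)..R, 2 ^ (a+ν) * z ^ (-1-ν) := by
              apply intervalIntegral.integral_mono_on hR2.le (hfI _ _)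
                ((II_inv (-1-ν) (by norm_num) hR2.le).const_mul _) comp4
          _ = 2 ^ (a+ν) * ∫ z in (2:ℝ)..R, z ^ (-1-ν) := intervalIntegral.integral_const_mul _ _
          _ ≤ 2 ^ (a+ν) * (2 ^ (-ν) / ν) :=
              mul_le_mul_of_nonneg_left (IL4 hν (by norm_num) hR2.le) h2aν
      have hsplit := intervalIntegral.integral_add_adjacent_intervals (hfI 0 2) (hfI 2 R)
      have h6 : (2:ℝ) ^ (-a) ≤ R ^ a * (1 + l + R) ^ (-a) :=
        key_ratio a ha.le hR hS (by norm_num) (by linarith)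
      have h5 : (2:ℝ) ^ (-ν) ≤ (1 + l) ^ (-ν) := rpAnti _ hA (by linarith) (by linarith)
      have h2c : (2:ℝ) ^ a * 2 ^ (-a) = 1 := rpow_cancel (by norm_num) a
      have h2cν : (2:ℝ) ^ ν * 2 ^ (-ν) = 1 := rpow_cancel (by norm_num) ν
      have hE : ∫ z in (0:ℝ)..R, f z ≤
          4 ^ |b₁| * 4 ^ |b₂| * 2 ^ a / a + 2 ^ (a+ν) * 2 ^ (-ν) / ν := by
        rw [← hsplit]
        have e1 : (4:ℝ) ^ |b₁| * 4 ^ |b₂| * (2 ^ a / a) = 4 ^ |b₁| * 4 ^ |b₂| * 2 ^ a / a := by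
          ring
        have e2 : (2:ℝ) ^ (a+ν) * (2 ^ (-ν) / ν) = 2 ^ (a+ν) * 2 ^ (-ν) / ν := by ring
        linarith [pA, pB]
      calc ∫ z in (0:ℝ)..R, f z
          ≤ 4 ^ |b₁| * 4 ^ |b₂| * 2 ^ a / a + 2 ^ (a+ν) * 2 ^ (-ν) / ν := hE
        _ = c3 * (2 ^ (-a) * 2 ^ (-ν)) := by
            rw [hc3]
            have e3 : ((4:ℝ) ^ |b₁| * 4 ^ |b₂| * 2 ^ a / a + 2 ^ (a+ν) * 2 ^ (-ν) / ν)
                * 2 ^ a * 2 ^ ν * (2 ^ (-a) * 2 ^ (-ν)) =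
                ((4:ℝ) ^ |b₁| * 4 ^ |b₂| * 2 ^ a / a + 2 ^ (a+ν) * 2 ^ (-ν) / ν)
                * ((2 ^ a * 2 ^ (-a)) * (2 ^ ν * 2 ^ (-ν))) := by ring
            rw [e3, h2c, h2cν]; ring
        _ ≤ c3 * (R ^ a * (1 + l + R) ^ (-a) * (1 + l) ^ (-ν)) := by
            apply mul_le_mul_of_nonneg_left _ hc3p.le
            calc (2:ℝ) ^ (-a) * 2 ^ (-ν)
                ≤ (R ^ a * (1 + l + R) ^ (-a)) * (1 + l) ^ (-ν) :=
                  mul_le_mul h6 h5 (rpNonneg (by norm_num) _) (mul_nonneg hRa hSa)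
              _ = R ^ a * (1 + l + R) ^ (-a) * (1 + l) ^ (-ν) := by ring
  · -- l > 1
    have hl1 : 1 ≤ l := hll.le
    have hl0 : 0 < l := by linarith
    have ecol4 : (1+l) ^ a * ((1+l) ^ (-b₁) * (1+l) ^ (-b₂)) = (1+l) ^ (-ν) := by
      rw [← Real.rpow_add hA, ← Real.rpow_add hA]; congr 1; linarith
    -- improved piece-1 bound
    have hp1' : ∫ z in (0:ℝ)..(l/2), f z ≤ 2 ^ |b₁| / a * (1+l) ^ (-ν) := by
      have h0 := hp1 (l/2) (by linarith) le_rfl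
      have hY : 0 ≤ (1+l) ^ (-b₁) * (1+l) ^ (-b₂) :=
        mul_nonneg (rpNonneg hA.le _) (rpNonneg hA.le _)
      have h1 : (l/2) ^ a ≤ (1+l) ^ a := Real.rpow_le_rpow (by linarith) (by linarith) ha.le
      calc ∫ z in (0:ℝ)..(l/2), f z
          ≤ 2 ^ |b₁| / a * ((l/2) ^ a * ((1+l) ^ (-b₁) * (1+l) ^ (-b₂))) := h0
        _ ≤ 2 ^ |b₁| / a * ((1+l) ^ a * ((1+l) ^ (-b₁) * (1+l) ^ (-b₂))) := by
            apply mul_le_mul_of_nonneg_left (mul_le_mul_of_nonneg_right h1 hY)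
            have := one_le_two_abs b₁; positivity
        _ = 2 ^ |b₁| / a * (1+l) ^ (-ν) := by rw [ecol4]
    have hT2nn : 0 ≤ 2 ^ |a-1| * 2 ^ |a-1| / (1 - b₁) * (1+l) ^ (-ν) := by
      apply mul_nonneg _ hAν
      apply div_nonneg _ hq.le
      exact mul_nonneg (rpNonneg (by norm_num) _) (rpNonneg (by norm_num) _)
    have hT4nn : 0 ≤ 2 ^ (a+ν) * 2 ^ ν / ν * (1+l) ^ (-ν) := by
      apply mul_nonneg _ hAν
      apply div_nonneg _ hν.le
      exact mul_nonneg (rpNonneg (by norm_num) _) (rpNonneg (by norm_num) _)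
    have hT1nn : 0 ≤ 2 ^ |b₁| / a * (1+l) ^ (-ν) := by
      apply mul_nonneg _ hAν
      apply div_nonneg (rpNonneg (by norm_num) _) ha.le
    have hexp : D * (1+l) ^ (-ν) = 2 ^ |b₁| / a * (1+l) ^ (-ν)
        + 2 * (2 ^ |a-1| * 2 ^ |a-1| / (1 - b₁) * (1+l) ^ (-ν))
        + 2 ^ (a+ν) * 2 ^ ν / ν * (1+l) ^ (-ν) := by
      rw [hD]; ring
    rcases le_or_gt R (l/2) with hRl | hRl
    · -- case (c)
      apply hfinC c1 hc1p (by linarith) _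
      have h0 := hp1 R hR.le hRl
      have ecol3 : (1+l) ^ (-b₁) * (1+l) ^ (-b₂) = (1+l) ^ (-a) * (1+l) ^ (-ν) := by
        rw [← Real.rpow_add hA, ← Real.rpow_add hA]; congr 1; linarith
      have hrt : (1+l) ^ (-a) ≤ (3/2) ^ a * (1 + l + R) ^ (-a) :=
        ratio_bound a ha.le hA hS (by norm_num) (by linarith)
      have hKnn : (0:ℝ) ≤ 2 ^ |b₁| / a := by
        apply div_nonneg (rpNonneg (by norm_num) _) ha.le
      calc ∫ z in (0:ℝ)..R, f z
          ≤ 2 ^ |b₁| / a * (R ^ a * ((1+l) ^ (-b₁) * (1+l) ^ (-b₂))) := h0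
        _ = 2 ^ |b₁| / a * (R ^ a * ((1+l) ^ (-a) * (1+l) ^ (-ν))) := by rw [ecol3]
        _ ≤ 2 ^ |b₁| / a * (R ^ a * (((3/2) ^ a * (1 + l + R) ^ (-a)) * (1+l) ^ (-ν))) := by
            apply mul_le_mul_of_nonneg_left _ hKnn
            apply mul_le_mul_of_nonneg_left _ hRa
            exact mul_le_mul_of_nonneg_right hrt hAν
        _ = c1 * (R ^ a * (1 + l + R) ^ (-a) * (1 + l) ^ (-ν)) := by rw [hc1]; ring
    · -- cases (d), (e), (f)
      apply hfinC c4 hc4p (by linarith) _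
      have hDA : ∫ z in (0:ℝ)..R, f z ≤ D * (1+l) ^ (-ν) := by
        rcases le_or_gt R l with hRl2 | hRl2
        · -- (d)
          have s1 := intervalIntegral.integral_add_adjacent_intervals (hfI 0 (l/2)) (hfI (l/2) R)
          rw [← s1, hexp]
          have p2 := hp2 hl1 R hRl.le hRl2
          linarith [hp1', p2, hT2nn, hT4nn]
        · rcases le_or_gt R (2*l) with hRl3 | hRl3
          · -- (e)
            have s1 := intervalIntegral.integral_add_adjacent_intervals (hfI 0 (l/2)) (hfI (l/2) l)
            have s2 := intervalIntegral.integral_add_adjacent_intervals (hfI 0 l) (hfI l R)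
            rw [← s2, ← s1, hexp]
            have p2 := hp2 hl1 l (by linarith) le_rfl
            have p3 := hp3 hl1 R hRl2.le hRl3
            linarith [hp1', p2, p3, hT4nn]
          · -- (f)
            have s1 := intervalIntegral.integral_add_adjacent_intervals (hfI 0 (l/2)) (hfI (l/2) l)
            have s2 := intervalIntegral.integral_add_adjacent_intervals (hfI 0 l) (hfI l (2*l))
            have s3 := intervalIntegral.integral_add_adjacent_intervals (hfI 0 (2*l)) (hfI (2*l) R)
            rw [← s3, ← s2, ← s1, hexp]
            have p2 := hp2 hl1 l (by linarith) le_rfl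
            have p3 := hp3 hl1 (2*l) (by linarith) le_rfl
            have p4 := hp4 hl1 hRl3.le
            linarith [hp1', p2, p3, p4]
      have h5r : (5:ℝ) ^ (-a) ≤ R ^ a * (1 + l + R) ^ (-a) :=
        key_ratio a ha.le hR hS (by norm_num) (by linarith)
      have h55 : (5:ℝ) ^ a * 5 ^ (-a) = 1 := rpow_cancel (by norm_num) a
      calc ∫ z in (0:ℝ)..R, f z
          ≤ D * (1+l) ^ (-ν) := hDA
        _ = (5 ^ a * 5 ^ (-a)) * (D * (1+l) ^ (-ν)) := by rw [h55]; ring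
        _ = c4 * (5 ^ (-a) * (1+l) ^ (-ν)) := by rw [hc4]; ring
        _ ≤ c4 * ((R ^ a * (1 + l + R) ^ (-a)) * (1+l) ^ (-ν)) := by
            apply mul_le_mul_of_nonneg_left (mul_le_mul_of_nonneg_right h5r hAν) hc4p.le
        _ = c4 * (R ^ a * (1 + l + R) ^ (-a) * (1 + l) ^ (-ν)) := by ring
end lemAsec

lemma lemU {a ν b₁ b₂ : ℝ} (ha : 0 < a) (hν : 0 < ν) (hb₁ : b₁ < 1) (hb : b₁ + b₂ = a + ν) :
    ∃ C : ℝ, 0 < C ∧ ∀ s R : ℝ, 0 < R →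
      ∫ z in (0:ℝ)..R, z ^ (a-1) * ((1 + |z + s|) ^ (-b₁) * (max (1 + |z + s|) (1 + |s|)) ^ (-b₂))
        ≤ C * (R ^ a * (1 + |s| + R) ^ (-a) * (1 + |s|) ^ (-ν)) := by
  obtain ⟨CA, hCA, hlemA⟩ := lemA ha hν hb₁ hb
  set CB : ℝ := 2 ^ a * (1/a + 1/ν) with hCB
  have hCBp : 0 < CB := by
    have := Real.rpow_pos_of_pos (show (0:ℝ) < 2 by norm_num) a
    rw [hCB]; positivity
  refine ⟨CA + CB, by linarith, ?_⟩
  intro s R hR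
  have hS : 0 < 1 + |s| + R := by have := abs_nonneg s; linarith
  have hA : 0 < 1 + |s| := by have := abs_nonneg s; linarith
  have hXnn : 0 ≤ R ^ a * (1 + |s| + R) ^ (-a) * (1 + |s|) ^ (-ν) := by
    have := rpNonneg hR.le a; have := rpNonneg hS.le (-a); have := rpNonneg hA.le (-ν)
    positivity
  rcases le_or_gt 0 s with hs | hs
  · -- s ≥ 0 : reduce to lemB
    have hcong : Set.EqOn
        (fun z => z ^ (a-1) * ((1 + |z + s|) ^ (-b₁) * (max (1 + |z + s|) (1 + |s|)) ^ (-b₂)))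
        (fun z => z ^ (a-1) * (1 + s + z) ^ (-(a+ν))) (Set.uIcc 0 R) := by
      intro z hz
      rw [Set.uIcc_of_le hR.le] at hz
      have hz0 : 0 ≤ z := hz.1
      simp only []
      rw [abs_of_nonneg hs, abs_of_nonneg (by linarith : (0:ℝ) ≤ z + s)]
      have e3 : max (1 + (z + s)) (1 + s) = 1 + (z + s) := max_eq_left (by linarith)
      rw [e3, show 1 + (z + s) = 1 + s + z from by ring,
        ← Real.rpow_add (by linarith : (0:ℝ) < 1 + s + z),
        show -b₁ + -b₂ = -(a+ν) from by linarith]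
    rw [intervalIntegral.integral_congr hcong, abs_of_nonneg hs]
    have hB := lemB ha hν hs hR
    refine hB.trans ?_
    apply mul_le_mul_of_nonneg_right _ (by rw [abs_of_nonneg hs] at hXnn; exact hXnn)
    rw [hCB]; linarith
  · -- s < 0 : reduce to lemA
    have h0 := hlemA (-s) R (by linarith) hR
    simp only [sub_neg_eq_add] at h0
    rw [abs_of_neg hs]
    exact h0.trans (mul_le_mul_of_nonneg_right (by linarith)
      (by rw [abs_of_neg hs] at hXnn; exact hXnn))

theorem stmt_11 (a ν b₁ b₂ : ℝ) (ha : 0 < a) (hν : 0 < ν) (hb₁ : b₁ < 1)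
    (hb : b₁ + b₂ = a + ν) :
    ∃ C : ℝ, 0 < C ∧ ∀ r t : ℝ, 0 < r →
      (∫ y in (t - r)..(t + r),
        (1 + |y|) ^ (-b₁) / (r - t + y) ^ (1 - a) * max (1 + |y|) (1 + |t - r|) ^ (-b₂)) ≤
        C * r ^ a * (1 + |t| + r) ^ (-a) * (1 + |(|t| - r)|) ^ (-ν) := by
  obtain ⟨CU, hCU, hU⟩ := lemU ha hν hb₁ hb
  have h2a : (0:ℝ) < 2 ^ a := Real.rpow_pos_of_pos (by norm_num) a
  refine ⟨CU * 2 ^ a, by positivity, ?_⟩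
  intro r t hr
  have hle : t - r ≤ t + r := by linarith
  -- step 1 : rewrite the division as multiplication
  have hcong : Set.EqOn
      (fun y => (1 + |y|) ^ (-b₁) / (r - t + y) ^ (1 - a) * max (1 + |y|) (1 + |t - r|) ^ (-b₂))
      (fun y => (1 + |y|) ^ (-b₁) * (r - t + y) ^ (a - 1) * max (1 + |y|) (1 + |t - r|) ^ (-b₂))
      (Set.uIcc (t - r) (t + r)) := by
    intro y hy
    rw [Set.uIcc_of_le hle] at hy
    have h0 : 0 ≤ r - t + y := by linarith [hy.1]
    simp only []
    rw [div_eq_mul_inv, ← Real.rpow_neg h0, show -(1 - a) = a - 1 from by ring]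
  rw [intervalIntegral.integral_congr hcong]
  -- step 2 : translate
  have hsub := intervalIntegral.integral_comp_add_right (a := 0) (b := 2*r)
    (fun y => (1 + |y|) ^ (-b₁) * (r - t + y) ^ (a - 1) * max (1 + |y|) (1 + |t - r|) ^ (-b₂))
    (t - r)
  rw [show (0:ℝ) + (t - r) = t - r from by ring, show 2*r + (t - r) = t + r from by ring] at hsub
  rw [← hsub]
  -- step 3 : normalize the integrand
  have hcong2 : Set.EqOn
      (fun x => (1 + |x + (t - r)|) ^ (-b₁) * (r - t + (x + (t - r))) ^ (a - 1) *
        max (1 + |x + (t - r)|) (1 + |t - r|) ^ (-b₂))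
      (fun z => z ^ (a-1) * ((1 + |z + (t - r)|) ^ (-b₁) *
        (max (1 + |z + (t - r)|) (1 + |t - r|)) ^ (-b₂))) (Set.uIcc 0 (2*r)) := by
    intro x _
    simp only []
    rw [show r - t + (x + (t - r)) = x from by ring]
    ring
  rw [intervalIntegral.integral_congr hcong2]
  -- step 4 : apply lemU and compare right-hand sides
  refine (hU (t - r) (2*r) (by linarith)).trans ?_
  have habs1 : |t| ≤ |t - r| + r := by
    calc |t| = |(t - r) + r| := by ring_nf
      _ ≤ |t - r| + |r| := abs_add_le _ _
      _ = |t - r| + r := by rw [abs_of_pos hr]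
  have habs2 : |(|t| - r)| ≤ |t - r| := by
    calc |(|t| - r)| = |(|t| - |r|)| := by rw [abs_of_pos hr]
      _ ≤ |t - r| := abs_abs_sub_abs_le_abs_sub t r
  have hP1 : 0 < 1 + |t| + r := by have := abs_nonneg t; linarith
  have hP2 : 0 < 1 + |(|t| - r)| := by have := abs_nonneg (|t| - r); linarith
  have h1 : (1 + |t - r| + 2*r) ^ (-a) ≤ (1 + |t| + r) ^ (-a) :=
    rpAnti _ hP1 (by linarith) (by linarith)
  have h2 : (1 + |t - r|) ^ (-ν) ≤ (1 + |(|t| - r)|) ^ (-ν) :=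
    rpAnti _ hP2 (by linarith) (by linarith)
  have hmul : (2*r) ^ a = 2 ^ a * r ^ a := Real.mul_rpow (by norm_num) hr.le
  have hra : 0 ≤ r ^ a := rpNonneg hr.le a
  have hnn1 : 0 ≤ (1 + |t| + r) ^ (-a) := rpNonneg hP1.le _
  have hnn2 : 0 ≤ (1 + |t - r|) ^ (-ν) := rpNonneg (by have := abs_nonneg (t - r); linarith) _
  calc CU * ((2*r) ^ a * (1 + |t - r| + 2*r) ^ (-a) * (1 + |t - r|) ^ (-ν))
      = (CU * 2 ^ a) * (r ^ a * ((1 + |t - r| + 2*r) ^ (-a) * (1 + |t - r|) ^ (-ν))) := by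
        rw [hmul]; ring
    _ ≤ (CU * 2 ^ a) * (r ^ a * ((1 + |t| + r) ^ (-a) * (1 + |(|t| - r)|) ^ (-ν))) := by
        apply mul_le_mul_of_nonneg_left _ (by positivity)
        apply mul_le_mul_of_nonneg_left _ hra
        exact mul_le_mul h1 h2 hnn2 hnn1
    _ = CU * 2 ^ a * r ^ a * (1 + |t| + r) ^ (-a) * (1 + |(|t| - r)|) ^ (-ν) := by ring
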